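/- Let R = k[[x_1, ..., x_n]] and I = (x_1^{a_1} ··· x_r^{a_r}) a principal monomial ideal with r ≤ n and a_i ∈ ℕ. Then the monomial x_1^{b_1} ··· x_n^{b_n} lies in I^{m-jsc} if and only if for all t_1, ..., t_n ∈ ℕ_{≥1} with t_1 b_1 + ··· + t_n b_n ≤ m, one has t_1 a_1 + ··· + t_r a_r ≤ m. -/

import Mathlib

open Polynomial

/-- The truncated polynomial ring `A[t]/(t^(m+1))`. -/
abbrev JetTrunc (A : Type) [CommRing A] (m : ℕ) : Type :=
  Polynomial A ⧸ (Ideal.span {(X : Polynomial A) ^ (m + 1)} : Ideal (Polynomial A))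

/-- The image of the variable `t` in `A[t]/(t^(m+1))`. -/
noncomputable def jetT (A : Type) [CommRing A] (m : ℕ) : JetTrunc A m :=
  Ideal.Quotient.mk _ (X : Polynomial A)

/-- A test datum for the `m`-th jet closure of an ideal `I` of a local `k`-algebra `(R, 𝔪)`:
a `k`-algebra `A` together with a `k`-algebra map `φ : R → A[t]/(t^(m+1))` killing `I`
and sending the maximal ideal `𝔪` into `(t)` (i.e. an `A`-point of the scheme of local
`m`-jets of `Spec (R/I)` over the closed point). -/
structure JetTest (k : Type) [CommRing k] {R : Type} [CommRing R] [Algebra k R]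
    (𝔪 : Ideal R) (m : ℕ) (I : Ideal R) where
  A : Type
  [instCommRing : CommRing A]
  [instAlgebra : Algebra k A]
  φ : R →ₐ[k] JetTrunc A m
  ker_I : ∀ f ∈ I, φ f = 0
  max_to_t : ∀ f ∈ 𝔪, φ f ∈ Ideal.span {jetT A m}

attribute [instance] JetTest.instCommRing JetTest.instAlgebra

/-- The `m`-th jet closure `I^{m-jc}` of an ideal `I` in a local `k`-algebra `(R, 𝔪)`:
the intersection of the kernels of all jet test maps (functor-of-points description of the
kernel of `μ_m : R → R_m[t]/(t^(m+1), I_m, 𝔪^e)`). -/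
noncomputable def jetClosure (k : Type) [CommRing k] {R : Type} [CommRing R] [Algebra k R]
    (𝔪 : Ideal R) (m : ℕ) (I : Ideal R) : Ideal R :=
  sInf { J : Ideal R | ∃ T : JetTest k 𝔪 m I, J = RingHom.ker T.φ }

/-- A test datum for the `m`-th jet support closure: like a jet closure test,
but with the coefficient `k`-algebra `A` required to be reduced (functor-of-points
description of maps from `(R_m/(I_m + 𝔪^e))_red`). -/
structure JetSupportTest (k : Type) [CommRing k] {R : Type} [CommRing R] [Algebra k R]
    (𝔪 : Ideal R) (m : ℕ) (I : Ideal R) where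
  A : Type
  [instCommRing : CommRing A]
  [instReduced : IsReduced A]
  [instAlgebra : Algebra k A]
  φ : R →ₐ[k] JetTrunc A m
  ker_I : ∀ f ∈ I, φ f = 0
  max_to_t : ∀ f ∈ 𝔪, φ f ∈ Ideal.span {jetT A m}

attribute [instance] JetSupportTest.instCommRing JetSupportTest.instReduced
  JetSupportTest.instAlgebra

/-- The `m`-th jet support closure `I^{m-jsc}` of an ideal `I` in a local `k`-algebra
`(R, 𝔪)`. -/
noncomputable def jetSupportClosure (k : Type) [CommRing k] {R : Type} [CommRing R]
    [Algebra k R] (𝔪 : Ideal R) (m : ℕ) (I : Ideal R) : Ideal R :=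
  sInf { J : Ideal R | ∃ T : JetSupportTest k 𝔪 m I, J = RingHom.ker T.φ }

/-- The maximal ideal `(x_1, ..., x_n)` of the formal power series ring `k[[x_1, ..., x_n]]`. -/
noncomputable def mIdeal (k : Type) [Field k] (n : ℕ) : Ideal (MvPowerSeries (Fin n) k) :=
  RingHom.ker (MvPowerSeries.constantCoeff : MvPowerSeries (Fin n) k →+* k)


lemma ntd_pow {A : Type} [CommRing A] [IsDomain A] (p : A[X]) (hp : p ≠ 0) (e : ℕ) :
    (p ^ e).natTrailingDegree = e * p.natTrailingDegree := by
  induction e with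
  | zero => simp
  | succ e ih =>
    rw [pow_succ, natTrailingDegree_mul (pow_ne_zero _ hp) hp, ih]
    ring

lemma ntd_prod_pow {A : Type} [CommRing A] [IsDomain A] {n : ℕ} (p : Fin n → A[X])
    (e : Fin n → ℕ) (hp : ∀ i, e i ≠ 0 → p i ≠ 0) :
    (∏ i : Fin n, p i ^ e i).natTrailingDegree = ∑ i : Fin n, e i * (p i).natTrailingDegree := by
  classical
  induction n with
  | zero => simp
  | succ n ih =>
    rw [Fin.prod_univ_succ, Fin.sum_univ_succ]
    by_cases h0 : e 0 = 0
    · simp only [h0, pow_zero, one_mul, zero_mul, zero_add]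
      exact ih _ _ fun i hi => hp _ hi
    · have hp0 : p 0 ≠ 0 := hp 0 h0
      have hfac : ∀ i : Fin n, p i.succ ^ e i.succ ≠ 0 := by
        intro i
        by_cases h : e i.succ = 0
        · simp [h]
        · exact pow_ne_zero _ (hp _ h)
      rw [natTrailingDegree_mul (pow_ne_zero _ hp0)
        (Finset.prod_ne_zero_iff.2 fun i _ => hfac i), ntd_pow _ hp0,
        ih _ _ fun i hi => hp _ hi]

lemma domain_key {A : Type} [CommRing A] [IsDomain A] {n m : ℕ} (p : Fin n → A[X])
    (a b : Fin n → ℕ) (hX : ∀ i, X ∣ p i)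
    (hcond : ∀ t : Fin n → ℕ, (∀ i, 1 ≤ t i) → ∑ i : Fin n, t i * b i ≤ m →
      ∑ i : Fin n, t i * a i ≤ m)
    (hdvd : X ^ (m + 1) ∣ ∏ i : Fin n, p i ^ a i) :
    X ^ (m + 1) ∣ ∏ i : Fin n, p i ^ b i := by
  classical
  by_cases hz : ∃ i, p i = 0 ∧ b i ≠ 0
  · obtain ⟨i, hpi, hbi⟩ := hz
    have : ∏ i : Fin n, p i ^ b i = 0 :=
      Finset.prod_eq_zero (Finset.mem_univ i) (by rw [hpi, zero_pow hbi])
    rw [this]; exact dvd_zero _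
  push_neg at hz
  -- define t
  set t : Fin n → ℕ := fun i => if p i = 0 then m + 1 else
    min ((p i).natTrailingDegree) (m + 1) with ht_def
  have ht1 : ∀ i, 1 ≤ t i := by
    intro i
    simp only [ht_def]
    split_ifs with h
    · omega
    · have : 0 < (p i).natTrailingDegree := by
        have h0 : (p i).coeff 0 = 0 := X_dvd_iff.1 (hX i)
        rcases Nat.eq_zero_or_pos (p i).natTrailingDegree with he | he
        · have := trailingCoeff_nonzero_iff_nonzero.2 h
          rw [trailingCoeff, he, h0] at this
          exact absurd rfl this
        · exact he
      omega
  -- Σ t a ≥ m + 1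
  have hta : m + 1 ≤ ∑ i : Fin n, t i * a i := by
    by_cases hz2 : ∃ i, p i = 0 ∧ a i ≠ 0
    · obtain ⟨i, hpi, hai⟩ := hz2
      calc m + 1 ≤ t i * a i := by
            simp only [ht_def, if_pos hpi]
            have : 1 ≤ a i := Nat.one_le_iff_ne_zero.2 hai
            nlinarith
        _ ≤ ∑ i : Fin n, t i * a i :=
            Finset.single_le_sum (f := fun i => t i * a i) (fun j _ => Nat.zero_le _)
              (Finset.mem_univ i)
    · push_neg at hz2
      have hz2' : ∀ i, a i ≠ 0 → p i ≠ 0 := fun i h hp => h (hz2 i hp)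
      by_cases hbig : ∃ i, a i ≠ 0 ∧ m + 1 ≤ (p i).natTrailingDegree
      · obtain ⟨i, hai, hbig⟩ := hbig
        calc m + 1 ≤ t i * a i := by
              have hpi : p i ≠ 0 := hz2' i hai
              simp only [ht_def, if_neg hpi]
              have : 1 ≤ a i := Nat.one_le_iff_ne_zero.2 hai
              have : min (p i).natTrailingDegree (m+1) = m+1 := min_eq_right hbig
              nlinarith
          _ ≤ ∑ i : Fin n, t i * a i :=
              Finset.single_le_sum (f := fun i => t i * a i) (fun j _ => Nat.zero_le _)
                (Finset.mem_univ i)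
      · push_neg at hbig
        have hne : (∏ i : Fin n, p i ^ a i) ≠ 0 := by
          apply Finset.prod_ne_zero_iff.2
          intro i _
          by_cases h : a i = 0
          · simp [h]
          · exact pow_ne_zero _ (hz2' i h)
        have h1 : m + 1 ≤ (∏ i : Fin n, p i ^ a i).natTrailingDegree := by
          rcases hdvd with ⟨q, hq⟩
          have hq0 : q ≠ 0 := by rintro rfl; simp_all
          rw [hq, natTrailingDegree_mul (pow_ne_zero _ X_ne_zero) hq0,
            natTrailingDegree_X_pow]
          omega
        rw [ntd_prod_pow _ _ (fun i hi => hz2' i hi)] at h1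
        refine h1.trans (Finset.sum_le_sum fun i _ => ?_)
        by_cases h : a i = 0
        · simp [h]
        · have hpi : p i ≠ 0 := hz2' i h
          have : t i = (p i).natTrailingDegree := by
            simp only [ht_def, if_neg hpi]
            exact min_eq_left (by have := hbig i h; omega)
          rw [this, Nat.mul_comm]
  -- contrapositive gives Σ t b ≥ m + 1
  have htb : m + 1 ≤ ∑ i : Fin n, t i * b i := by
    by_contra hc
    have := hcond t ht1 (by omega)
    omega
  -- conclude
  have hdvd2 : X ^ (∑ i : Fin n, t i * b i) ∣ ∏ i : Fin n, p i ^ b i := by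
    have : (X : A[X]) ^ (∑ i : Fin n, t i * b i) = ∏ i : Fin n, (X ^ t i) ^ b i := by
      rw [← Finset.prod_pow_eq_pow_sum]
      simp [pow_mul]
    rw [this]
    apply Finset.prod_dvd_prod_of_dvd
    intro i _
    apply pow_dvd_pow_of_dvd
    by_cases hpi : p i = 0
    · rw [hpi]; exact dvd_zero _
    · -- X ^ t i ∣ p i
      have hti : t i ≤ (p i).natTrailingDegree := by
        simp only [ht_def, if_neg hpi]; exact min_le_left _ _
      exact dvd_trans (pow_dvd_pow _ hti) (X_pow_dvd_iff.2 fun d hd =>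
        coeff_eq_zero_of_lt_natTrailingDegree hd)
  exact dvd_trans (pow_dvd_pow _ htb) hdvd2

lemma reduced_key {A : Type} [CommRing A] [IsReduced A] {n m : ℕ} (p : Fin n → A[X])
    (a b : Fin n → ℕ) (hX : ∀ i, X ∣ p i)
    (hcond : ∀ t : Fin n → ℕ, (∀ i, 1 ≤ t i) → ∑ i : Fin n, t i * b i ≤ m →
      ∑ i : Fin n, t i * a i ≤ m)
    (hdvd : X ^ (m + 1) ∣ ∏ i : Fin n, p i ^ a i) :
    X ^ (m + 1) ∣ ∏ i : Fin n, p i ^ b i := by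
  rw [X_pow_dvd_iff]
  intro d hd
  have hnil : (∏ i : Fin n, p i ^ b i).coeff d ∈ nilradical A := by
    rw [nilradical_eq_sInf]
    apply Ideal.mem_sInf.2
    rintro P hP
    haveI : P.IsPrime := hP
    let f := Ideal.Quotient.mk P
    have hmapb : (∏ i : Fin n, p i ^ b i).map f = ∏ i : Fin n, (p i).map f ^ b i := by
      rw [Polynomial.map_prod]; simp [Polynomial.map_pow]
    have hmapa : (∏ i : Fin n, p i ^ a i).map f = ∏ i : Fin n, (p i).map f ^ a i := by
      rw [Polynomial.map_prod]; simp [Polynomial.map_pow]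
    have hdom : X ^ (m + 1) ∣ ∏ i : Fin n, (p i).map f ^ b i := by
      apply domain_key _ a b (fun i => by
        simpa using Polynomial.map_dvd f (hX i)) hcond
      rw [← hmapa]
      simpa using Polynomial.map_dvd f hdvd
    have h0 : ((∏ i : Fin n, p i ^ b i).map f).coeff d = 0 := by
      rw [hmapb]
      exact X_pow_dvd_iff.1 hdom d hd
    rw [Polynomial.coeff_map] at h0
    exact Ideal.Quotient.eq_zero_iff_mem.1 h0
  have : IsNilpotent ((∏ i : Fin n, p i ^ b i).coeff d) := hnil
  exact this.eq_zero

namespace JSCAux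

lemma jetT_pow_eq_zero (A : Type) [CommRing A] (m s : ℕ) (h : m + 1 ≤ s) :
    (jetT A m) ^ s = 0 := by
  have : (jetT A m) ^ s = Ideal.Quotient.mk _ ((X : Polynomial A) ^ s) := by
    rw [jetT, ← map_pow]
  rw [this, Ideal.Quotient.eq_zero_iff_mem]
  exact Ideal.mem_span_singleton.2 (pow_dvd_pow _ h)

lemma jetT_pow_ne_zero (A : Type) [CommRing A] [Nontrivial A] (m s : ℕ) (h : s ≤ m) :
    (jetT A m) ^ s ≠ 0 := by
  intro hc
  have : (Ideal.Quotient.mk _ ((X : Polynomial A) ^ s) : JetTrunc A m) = 0 := by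
    rw [map_pow]; exact hc
  rw [Ideal.Quotient.eq_zero_iff_mem, Ideal.mem_span_singleton, X_pow_dvd_iff] at this
  have := this s (by omega)
  simp [Polynomial.coeff_X_pow] at this

variable {K : Type} [CommRing K] {n : ℕ} (m : ℕ) (t : Fin n → ℕ)

/-- The truncation box. -/
noncomputable def NN (n m : ℕ) : Fin n →₀ ℕ := Finsupp.equivFunOnFinite.symm fun _ => m + 2

@[simp] lemma NN_apply (n m : ℕ) (i : Fin n) : NN n m i = m + 2 := rfl

/-- The weight of a multidegree. -/
def W (d : Fin n →₀ ℕ) : ℕ := ∑ i : Fin n, t i * d i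

lemma lt_NN (hn : 0 < n) (d : Fin n →₀ ℕ) (hd : ∀ i, d i ≤ m + 1) : d < NN n m := by
  rw [lt_iff_le_and_ne]
  constructor
  · rw [Finsupp.le_def]
    intro i
    have := hd i
    simp only [NN_apply]
    omega
  · intro hc
    have : d ⟨0, hn⟩ = m + 2 := by rw [hc]; rfl
    have := hd ⟨0, hn⟩
    omega

lemma apply_le_W (ht : ∀ i, 1 ≤ t i) (d : Fin n →₀ ℕ) (i : Fin n) : d i ≤ W t d := by
  calc d i ≤ t i * d i := Nat.le_mul_of_pos_left _ (ht i)
    _ ≤ W t d := Finset.single_le_sum (f := fun j => t j * d j)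
        (fun j _ => Nat.zero_le _) (Finset.mem_univ i)

/-- The substitution targets. -/
noncomputable def v : Fin n → JetTrunc K m := fun i => (jetT K m) ^ (t i)

lemma aeval_monomial_eq (d : Fin n →₀ ℕ) (c : K) :
    MvPolynomial.aeval (v m t) (MvPolynomial.monomial d c) =
      algebraMap K (JetTrunc K m) c * (jetT K m) ^ (W t d) := by
  rw [MvPolynomial.aeval_monomial]
  congr 1
  rw [Finsupp.prod_fintype _ _ (fun i => pow_zero _)]
  simp only [v, ← pow_mul]
  rw [Finset.prod_pow_eq_pow_sum]
  rfl

lemma aeval_eq_zero (p : MvPolynomial (Fin n) K)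
    (h : ∀ d, W t d ≤ m → p.coeff d = 0) : MvPolynomial.aeval (v (K := K) m t) p = 0 := by
  rw [MvPolynomial.as_sum p, map_sum]
  apply Finset.sum_eq_zero
  intro d hd
  rw [aeval_monomial_eq]
  by_cases hw : W t d ≤ m
  · rw [h d hw, map_zero, zero_mul]
  · rw [jetT_pow_eq_zero _ _ _ (by omega), mul_zero]

lemma coeff_le_box (ht : ∀ i, 1 ≤ t i) (d : Fin n →₀ ℕ) (hd : W t d ≤ m) (i : Fin n) :
    d i ≤ m + 1 := le_trans (apply_le_W t ht d i) (by omega)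

/-- The substitution map `f(x) ↦ f(t^{t_1}, ..., t^{t_n})` as a function. -/
noncomputable def jetSubstFun : MvPowerSeries (Fin n) K → JetTrunc K m := fun f =>
  MvPolynomial.aeval (v (K := K) m t) (MvPowerSeries.trunc K (NN n m) f)

lemma jetSubstFun_mul (hn : 0 < n) (ht : ∀ i, 1 ≤ t i) (f g : MvPowerSeries (Fin n) K) :
    jetSubstFun m t (f * g) = jetSubstFun m t f * jetSubstFun m t g := by
  have key : MvPolynomial.aeval (v (K := K) m t)
      (MvPowerSeries.trunc K (NN n m) (f * g) -
        MvPowerSeries.trunc K (NN n m) f * MvPowerSeries.trunc K (NN n m) g) = 0 := by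
    apply aeval_eq_zero
    intro d hd
    have hlt : ∀ e : Fin n →₀ ℕ, (∀ i, e i ≤ m + 1) → e < NN n m := lt_NN m hn
    have hdlt : d < NN n m := hlt d (coeff_le_box m t ht d hd)
    rw [MvPolynomial.coeff_sub, MvPowerSeries.coeff_trunc, if_pos hdlt,
      MvPolynomial.coeff_mul, MvPowerSeries.coeff_mul]
    rw [Finset.sum_congr rfl (fun uv huv => ?_), sub_self]
    obtain ⟨u, w⟩ := uv
    rw [Finset.HasAntidiagonal.mem_antidiagonal] at huv
    have hu : u < NN n m := hlt u fun i => by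
      have : u i + w i = d i := by rw [← huv]; rfl
      have := coeff_le_box m t ht d hd i
      omega
    have hw : w < NN n m := hlt w fun i => by
      have : u i + w i = d i := by rw [← huv]; rfl
      have := coeff_le_box m t ht d hd i
      omega
    rw [MvPowerSeries.coeff_trunc, MvPowerSeries.coeff_trunc, if_pos hu, if_pos hw]
  have key2 : MvPolynomial.aeval (v (K := K) m t) (MvPowerSeries.trunc K (NN n m) (f * g)) =
      MvPolynomial.aeval (v (K := K) m t)
        (MvPowerSeries.trunc K (NN n m) f * MvPowerSeries.trunc K (NN n m) g) := by
    rw [← sub_eq_zero, ← map_sub]; exact key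
  simp only [jetSubstFun]
  rw [key2, map_mul]

/-- The substitution algebra map. -/
noncomputable def jetSubst (hn : 0 < n) (ht : ∀ i, 1 ≤ t i) :
    MvPowerSeries (Fin n) K →ₐ[K] JetTrunc K m where
  toFun := jetSubstFun m t
  map_one' := by
    simp only [jetSubstFun]
    rw [MvPowerSeries.trunc_one _ (fun hc => by
      have : (NN n m) ⟨0, hn⟩ = 0 := by rw [hc]; rfl
      simp at this), map_one]
  map_mul' := jetSubstFun_mul m t hn ht
  map_zero' := by simp only [jetSubstFun]; rw [map_zero, map_zero]
  map_add' f g := by simp only [jetSubstFun]; rw [map_add, map_add]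
  commutes' r := by
    simp only [jetSubstFun]
    show MvPolynomial.aeval _ (MvPowerSeries.trunc K (NN n m) (MvPowerSeries.C (σ := Fin n) (R := K) r)) = _
    rw [MvPowerSeries.trunc_C _ (fun hc => by
      have : (NN n m) ⟨0, hn⟩ = 0 := by rw [hc]; rfl
      simp at this), MvPolynomial.aeval_C]

lemma jetSubst_X (hn : 0 < n) (ht : ∀ i, 1 ≤ t i) (i : Fin n) :
    jetSubst m t hn ht (MvPowerSeries.X i) = (jetT K m) ^ (t i) := by
  classical
  show MvPolynomial.aeval (v (K := K) m t) (MvPowerSeries.trunc K (NN n m) _) = _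
  have htr : MvPowerSeries.trunc K (NN n m) (MvPowerSeries.X i) = MvPolynomial.X i := by
    apply MvPolynomial.ext
    intro d
    rw [MvPowerSeries.coeff_trunc, MvPowerSeries.coeff_X, MvPolynomial.coeff_X']
    have hs : Finsupp.single i 1 < NN n m := lt_NN m hn _ fun j => by
      rcases eq_or_ne j i with rfl | hji
      · simp
      · rw [Finsupp.single_eq_of_ne hji]; omega
    rcases eq_or_ne d (Finsupp.single i 1) with rfl | hd
    · simp [hs]
    · have h2 : ¬(Finsupp.single i 1 = d) := fun h => hd h.symm
      simp [hd, h2]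
  rw [htr, MvPolynomial.aeval_X]
  rfl

lemma jetSubst_prod_pow (hn : 0 < n) (ht : ∀ i, 1 ≤ t i) (e : Fin n → ℕ) :
    jetSubst (K := K) m t hn ht (∏ i : Fin n, (MvPowerSeries.X i) ^ e i) =
      (jetT K m) ^ (∑ i : Fin n, t i * e i) := by
  rw [map_prod]
  simp only [map_pow, jetSubst_X m t hn ht, ← pow_mul]
  rw [Finset.prod_pow_eq_pow_sum]

end JSCAux

namespace JSCAux

lemma jetSubstFun_mem_span {K : Type} [CommRing K] {n : ℕ} (m : ℕ) (t : Fin n → ℕ)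
    (hn : 0 < n) (ht : ∀ i, 1 ≤ t i) (f : MvPowerSeries (Fin n) K)
    (hf : MvPowerSeries.constantCoeff f = 0) :
    jetSubstFun m t f ∈ Ideal.span {jetT K m} := by
  simp only [jetSubstFun]
  rw [MvPolynomial.as_sum (MvPowerSeries.trunc K (NN n m) f), map_sum]
  apply Ideal.sum_mem
  intro d hd
  have hd0 : d ≠ 0 := by
    rintro rfl
    rw [MvPolynomial.mem_support_iff, MvPowerSeries.coeff_trunc] at hd
    apply hd
    rw [if_pos (lt_NN m hn 0 fun i => by simp)]
    rw [MvPowerSeries.coeff_zero_eq_constantCoeff]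
    exact hf
  have hW : 1 ≤ W t d := by
    obtain ⟨i, hi⟩ : ∃ i, d i ≠ 0 := by
      by_contra hc
      push_neg at hc
      exact hd0 (Finsupp.ext fun i => hc i)
    have h1 : 1 ≤ t i * d i := Nat.one_le_iff_ne_zero.2 (by
      have := ht i; positivity)
    exact le_trans h1 (Finset.single_le_sum (f := fun j => t j * d j)
      (fun j _ => Nat.zero_le _) (Finset.mem_univ i))
  rw [aeval_monomial_eq]
  exact Ideal.mem_span_singleton.2
    (Dvd.dvd.mul_left (dvd_pow_self _ (by omega : W t d ≠ 0)) _)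

end JSCAux

open JSCAux

/-- for a principal monomial ideal `I = (x_1^{a_1} ⋯ x_r^{a_r})` in
`k[[x_1, ..., x_n]]` (with `a_i = 0` for `i > r`), the monomial `x_1^{b_1} ⋯ x_n^{b_n}`
lies in `I^{m-jsc}` iff for all `t_1, ..., t_n ≥ 1` with `Σ t_i b_i ≤ m` one has
`Σ t_i a_i ≤ m`. -/
theorem monomial_mem_jetSupportClosure_principal (k : Type) [Field k] [IsAlgClosed k]
    [CharZero k] (n r : ℕ) (hr : r ≤ n) (a : Fin n → ℕ)
    (ha : ∀ i : Fin n, r ≤ (i : ℕ) → a i = 0) (m : ℕ) (b : Fin n → ℕ) :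
    (∏ i : Fin n, (MvPowerSeries.X i : MvPowerSeries (Fin n) k) ^ b i) ∈
        jetSupportClosure k (mIdeal k n) m
          (Ideal.span {∏ i : Fin n, (MvPowerSeries.X i : MvPowerSeries (Fin n) k) ^ a i}) ↔
      ∀ t : Fin n → ℕ, (∀ i, 1 ≤ t i) → ∑ i : Fin n, t i * b i ≤ m →
        ∑ i : Fin n, t i * a i ≤ m := by
  set I : Ideal (MvPowerSeries (Fin n) k) :=
    Ideal.span {∏ i : Fin n, (MvPowerSeries.X i : MvPowerSeries (Fin n) k) ^ a i} with hI
  have mem_iff : ∀ x : MvPowerSeries (Fin n) k,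
      (x ∈ jetSupportClosure k (mIdeal k n) m I ↔
        ∀ T : JetSupportTest k (mIdeal k n) m I, T.φ x = 0) := by
    intro x
    rw [jetSupportClosure]
    constructor
    · intro h T
      exact RingHom.mem_ker.1 (Ideal.mem_sInf.1 h ⟨T, rfl⟩)
    · intro h
      apply Ideal.mem_sInf.2
      rintro J ⟨T, rfl⟩
      exact RingHom.mem_ker.2 (h T)
  rw [mem_iff]
  constructor
  · -- forward: membership implies numerical condition
    intro hmem t ht htb
    by_contra hta
    push_neg at hta
    have hn : 0 < n := by
      rcases Nat.eq_zero_or_pos n with rfl | hn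
      · simp at hta
      · exact hn
    -- build the test
    haveI : IsReduced k := inferInstance
    set T : JetSupportTest k (mIdeal k n) m I :=
      { A := k
        φ := jetSubst m t hn ht
        ker_I := by
          intro f hf
          rw [Ideal.mem_span_singleton] at hf
          obtain ⟨g, rfl⟩ := hf
          rw [map_mul, jetSubst_prod_pow m t hn ht a,
            jetT_pow_eq_zero k m _ (by omega), zero_mul]
        max_to_t := by
          intro f hf
          exact jetSubstFun_mem_span m t hn ht f hf } with hT
    have h0 := hmem T
    rw [show T.φ = jetSubst m t hn ht from rfl, jetSubst_prod_pow m t hn ht b] at h0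
    exact jetT_pow_ne_zero k m _ htb h0
  · -- backward: numerical condition implies membership
    intro hcond T
    -- representatives of the images of the variables
    have hc : ∀ i : Fin n, ∃ q : Polynomial T.A,
        T.φ (MvPowerSeries.X i) = Ideal.Quotient.mk _ (X * q) := by
      intro i
      have hXi : (MvPowerSeries.X i : MvPowerSeries (Fin n) k) ∈ mIdeal k n := by
        rw [mIdeal, RingHom.mem_ker]
        exact MvPowerSeries.constantCoeff_X i
      have hsp := T.max_to_t _ hXi
      rw [Ideal.mem_span_singleton] at hsp
      obtain ⟨z, hz⟩ := hsp
      obtain ⟨q, rfl⟩ := Ideal.Quotient.mk_surjective z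
      exact ⟨q, by rw [hz, jetT, ← map_mul]⟩
    choose q hq using hc
    set p : Fin n → Polynomial T.A := fun i => X * q i with hp
    have hXp : ∀ i, X ∣ p i := fun i => ⟨q i, rfl⟩
    have hdvda : X ^ (m + 1) ∣ ∏ i : Fin n, p i ^ a i := by
      have h0 : T.φ (∏ i : Fin n, (MvPowerSeries.X i : MvPowerSeries (Fin n) k) ^ a i) = 0 :=
        T.ker_I _ (Ideal.mem_span_singleton_self _)
      rw [map_prod] at h0
      simp only [map_pow, hq] at h0
      simp only [← map_pow, ← map_prod] at h0
      rw [← Ideal.mem_span_singleton, ← Ideal.Quotient.eq_zero_iff_mem]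
      exact h0
    have hkey := reduced_key p a b hXp hcond hdvda
    have h0 : T.φ (∏ i : Fin n, (MvPowerSeries.X i : MvPowerSeries (Fin n) k) ^ b i) = 0 := by
      rw [map_prod]
      simp only [map_pow, hq]
      simp only [← map_pow, ← map_prod]
      rw [Ideal.Quotient.eq_zero_iff_mem, Ideal.mem_span_singleton]
      exact hkey
    exact h0
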